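/- Let D be a convex body in ℝⁿ with nonempty interior and let Δ ⊆ D be an n-dimensional simplex of maximal volume among all simplices contained in D. If the barycenter of Δ is at the origin, then D ⊆ −n·Δ, where −n·Δ = {−n·x : x ∈ Δ}. -/

import Mathlib

open MeasureTheory Pointwise

lemma det_id_add_smulRight {E : Type*} [AddCommGroup E] [Module ℝ E] [FiniteDimensional ℝ E]
    (l : E →ₗ[ℝ] ℝ) (v : E) :
    LinearMap.det (LinearMap.id + l.smulRight v) = 1 + l v := by
  classical
  set b := Module.finBasis ℝ E
  rw [← LinearMap.det_toMatrix b]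
  have h : LinearMap.toMatrix b b (LinearMap.id + l.smulRight v)
      = 1 + Matrix.replicateCol Unit (fun i => b.repr v i) * Matrix.replicateRow Unit (fun j => l (b j)) := by
    ext i j
    simp [LinearMap.toMatrix_apply, Matrix.mul_apply, Matrix.one_apply, Matrix.replicateCol, Matrix.replicateRow,
      Finsupp.single_apply, mul_comm, eq_comm]
  rw [h, Matrix.det_one_add_replicateCol_mul_replicateRow]
  congr 1
  rw [dotProduct]
  conv_rhs => rw [← b.sum_repr v]
  simp [map_sum, mul_comm, Finset.mul_sum]
  conv_rhs => rw [← b.sum_repr v]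
  rw [map_sum]
  exact Finset.sum_congr rfl fun i _ => by rw [map_smul, smul_eq_mul, mul_comm]

/-- If `Δ ⊆ D` is a simplex of maximal volume among all simplices contained in the
convex body `D ⊂ ℝⁿ`, and the barycenter of `Δ` is at the origin, then `D ⊆ −n·Δ`. -/
theorem maximal_simplex_contains (n : ℕ)
    (D : Set (EuclideanSpace ℝ (Fin n)))
    (hD : D.Nonempty ∧ IsCompact D ∧ Convex ℝ D)
    (hDint : (interior D).Nonempty)
    (p : Fin (n + 1) → EuclideanSpace ℝ (Fin n))
    (hp : AffineIndependent ℝ p)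
    (hsub : convexHull ℝ (Set.range p) ⊆ D)
    (hmax : ∀ q : Fin (n + 1) → EuclideanSpace ℝ (Fin n), AffineIndependent ℝ q →
      convexHull ℝ (Set.range q) ⊆ D →
      volume (convexHull ℝ (Set.range q)) ≤ volume (convexHull ℝ (Set.range p)))
    (hbary : ∑ i, p i = 0) :
    D ⊆ (-(n : ℝ)) • convexHull ℝ (Set.range p) := by
  classical
  obtain ⟨hDne, hDcomp, hDconv⟩ := hD
  rcases Nat.eq_zero_or_pos n with hn | hn
  · subst hn
    intro x hx
    refine Set.mem_smul_set.mpr ⟨p 0, subset_convexHull ℝ _ ⟨0, rfl⟩, ?_⟩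
    exact Subsingleton.elim _ _
  have htot : affineSpan ℝ (Set.range p) = ⊤ := by
    rw [hp.affineSpan_eq_top_iff_card_eq_finrank_add_one]
    simp
  let b : AffineBasis (Fin (n + 1)) ℝ (EuclideanSpace ℝ (Fin n)) := ⟨p, hp, htot⟩
  have hbp : ∀ j, b j = p j := fun j => rfl
  set Δ := convexHull ℝ (Set.range p) with hΔ
  have hΔint : (interior Δ).Nonempty := by
    have h := b.centroid_mem_interior_convexHull
    have hr : Set.range (b : Fin (n + 1) → EuclideanSpace ℝ (Fin n)) = Set.range p := rfl
    rw [hr] at h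
    exact ⟨_, h⟩
  have hΔpos : 0 < volume Δ :=
    lt_of_lt_of_le (isOpen_interior.measure_pos volume hΔint) (measure_mono interior_subset)
  have hΔlt : volume Δ < ⊤ := ((Set.finite_range p).isCompact_convexHull ℝ).measure_lt_top
  -- Key step: all barycentric coordinates of points of `D` are at most `1`.
  have key : ∀ x ∈ D, ∀ i, b.coord i x ≤ 1 := by
    intro x hx i
    by_contra hlt
    push_neg at hlt
    set c := b.coord i x with hc
    set v := x - p i with hv
    set l := (b.coord i).linear with hl
    have hlv : l v = c - 1 := by
      have h1 : b.coord i (v +ᵥ p i) = l v +ᵥ b.coord i (p i) := (b.coord i).map_vadd _ _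
      have h2 : b.coord i (p i) = 1 := b.coord_apply_eq i
      have h3 : v +ᵥ p i = x := by
        simp [hv, vadd_eq_add, sub_add_cancel]
      rw [h3, h2] at h1
      simp only [vadd_eq_add] at h1
      linarith [h1]
    set L : EuclideanSpace ℝ (Fin n) →ₗ[ℝ] EuclideanSpace ℝ (Fin n) :=
      LinearMap.id + l.smulRight v with hL
    have hdet : LinearMap.det L = c := by
      rw [hL, det_id_add_smulRight, hlv]; ring
    have hcpos : (0:ℝ) < c := lt_trans one_pos hlt
    -- the affine map sending `p i` to `x` and fixing the other vertices
    set T : EuclideanSpace ℝ (Fin n) →ᵃ[ℝ] EuclideanSpace ℝ (Fin n) :=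
      { toFun := fun y => y + (b.coord i y) • v
        linear := L
        map_vadd' := by
          intro q w
          have : b.coord i (w +ᵥ q) = l w +ᵥ b.coord i q := (b.coord i).map_vadd _ _
          simp only [vadd_eq_add] at this ⊢
          rw [this]
          simp only [hL, LinearMap.add_apply, LinearMap.id_apply, LinearMap.smulRight_apply,
            add_smul]
          abel } with hT
    have hTapply : ∀ y, T y = y + (b.coord i y) • v := fun y => rfl
    have hTinj : Function.Injective T := by
      have hLinj : Function.Injective L := by
        have : LinearMap.det L ≠ 0 := by rw [hdet]; exact ne_of_gt hcpos
        exact (LinearMap.equivOfDetNeZero L this).injective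
      intro y1 y2 h
      have hd := (b.coord i).decomp
      have e1 : (b.coord i) y1 = l y1 + (b.coord i) 0 := by
        conv_lhs => rw [hd]
        rfl
      have e2 : (b.coord i) y2 = l y2 + (b.coord i) 0 := by
        conv_lhs => rw [hd]
        rfl
      have : L y1 + (b.coord i 0) • v = L y2 + (b.coord i 0) • v := by
        have := h
        simp only [hTapply] at this
        rw [e1, e2] at this
        simp only [hL, LinearMap.add_apply, LinearMap.id_apply, LinearMap.smulRight_apply]
        simp only [add_smul] at this
        abel_nf at this ⊢
        exact this
      exact hLinj (add_right_cancel this)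
    have hqind : AffineIndependent ℝ (T ∘ p) := hp.map' T hTinj
    have hTpj : ∀ j, j ≠ i → T (p j) = p j := by
      intro j hj
      have : b.coord i (p j) = 0 := by
        have := b.coord_apply i j
        rw [hbp] at this
        simpa [Ne.symm hj] using this
      simp [hTapply, this]
    have hTpi : T (p i) = x := by
      have : b.coord i (p i) = 1 := b.coord_apply_eq i
      simp [hTapply, this, hv]
    have hqsub : convexHull ℝ (Set.range (T ∘ p)) ⊆ D := by
      apply convexHull_min _ hDconv
      rintro _ ⟨j, rfl⟩
      rcases eq_or_ne j i with rfl | hj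
      · rw [Function.comp_apply, hTpi]; exact hx
      · rw [Function.comp_apply, hTpj j hj]
        exact hsub (subset_convexHull ℝ _ ⟨j, rfl⟩)
    have hvol : volume (convexHull ℝ (Set.range (T ∘ p))) = ENNReal.ofReal c * volume Δ := by
      have h1 : convexHull ℝ (Set.range (T ∘ p)) = T '' Δ := by
        rw [hΔ, T.image_convexHull, Set.range_comp]
      have h2 : T '' Δ = (fun z => (b.coord i 0) • v + z) '' (L '' Δ) := by
        rw [← Set.image_comp]
        apply congrFun
        apply congrArg
        funext y
        have hd := (b.coord i).decomp
        have e1 : (b.coord i) y = l y + (b.coord i) 0 := by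
          conv_lhs => rw [hd]
          rfl
        simp only [Function.comp_apply, hTapply, e1, hL, LinearMap.add_apply,
          LinearMap.id_apply, LinearMap.smulRight_apply, add_smul]
        abel
      rw [h1, h2]
      have h3 : (fun z => (b.coord i 0) • v + z) '' (L '' Δ)
          = (b.coord i 0) • v +ᵥ (L '' Δ) := by
        rw [← Set.image_vadd]
        rfl
      rw [h3, measure_vadd, Measure.addHaar_image_linearMap, hdet, abs_of_pos hcpos]
    have hle := hmax (T ∘ p) hqind hqsub
    rw [hvol] at hle
    have h1c : (1 : ENNReal) < ENNReal.ofReal c := ENNReal.one_lt_ofReal.mpr hlt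
    have : volume Δ < ENNReal.ofReal c * volume Δ := by
      conv_lhs => rw [← one_mul (volume Δ)]
      exact (ENNReal.mul_lt_mul_iff_left (ne_of_gt hΔpos) (ne_of_lt hΔlt)).mpr h1c
    exact absurd hle (not_le.mpr this)
  -- Conclusion
  intro x hx
  set l : Fin (n + 1) → ℝ := fun j => b.coord j x with hlky
  have hsuml : ∑ j, l j = 1 := b.sum_coord_apply_eq_one x
  have hxl : ∑ j, l j • p j = x := by
    have := b.linear_combination_coord_eq_self x
    simpa [hlky, hbp] using this
  set w : Fin (n + 1) → ℝ := fun j => (1 - l j) / n with hw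
  have hw0 : ∀ j, 0 ≤ w j := by
    intro j
    apply div_nonneg _ (Nat.cast_nonneg n)
    linarith [key x hx j]
  have hsumw : ∑ j, w j = 1 := by
    have hn' : (n : ℝ) ≠ 0 := Nat.cast_ne_zero.mpr hn.ne'
    simp only [hw]
    rw [← Finset.sum_div, Finset.sum_sub_distrib, hsuml]
    simp only [Finset.sum_const, Finset.card_univ, Fintype.card_fin, nsmul_eq_mul, mul_one,
      Nat.cast_add, Nat.cast_one, add_sub_cancel_right]
    exact div_self hn'
  set y := ∑ j, w j • p j with hy
  have hymem : y ∈ Δ := by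
    have := Finset.centerMass_mem_convexHull (Finset.univ : Finset (Fin (n + 1)))
      (fun j _ => hw0 j) (by rw [hsumw]; norm_num)
      (fun j _ => Set.mem_range_self (f := p) j)
    rwa [Finset.centerMass_eq_of_sum_1 _ _ hsumw] at this
  refine Set.mem_smul_set.mpr ⟨y, hymem, ?_⟩
  have hn' : (n : ℝ) ≠ 0 := Nat.cast_ne_zero.mpr hn.ne'
  rw [hy, Finset.smul_sum]
  have : ∀ j, (-(n : ℝ)) • (w j • p j) = l j • p j - p j := by
    intro j
    rw [smul_smul, hw]
    have : -(n : ℝ) * ((1 - l j) / n) = l j - 1 := by field_simp; ring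
    rw [this, sub_smul, one_smul]
  rw [Finset.sum_congr rfl (fun j _ => this j), Finset.sum_sub_distrib, hbary, hxl, sub_zero]
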